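/- Derivative formula (Theorem 2.14, k = 1, Y = 1): with D_{m,λ}(n,x) = Σ_{k=0}^{n} W_{m,λ}(n,k) x^k, where W_{m,λ}(n,k) = (1/(m^k k!)) Σ_{j=0}^{k} C(k,j)(-1)^{k-j}(mj+1)_{n,λ}, for every n ≥ 1 the derivative with respect to x satisfies (d/dx) D_{m,λ}(n,x) = Σ_{j=0}^{n-1} C(n,j) (1)_{n-j, λ/m} · m^{n-j-1} · D_{m,λ}(j,x). -/

import Mathlib

open Finset Polynomial

/-- The degenerate falling factorial `(x)_{n,λ} = x(x-λ)⋯(x-(n-1)λ)`, with `(x)_{0,λ} = 1`. -/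
def degFall (x lam : ℝ) (n : ℕ) : ℝ :=
  ∏ i ∈ Finset.range n, (x - (i : ℝ) * lam)

/-- The degenerate Whitney numbers of the second kind. -/
noncomputable def degWhitney (m : ℕ) (lam : ℝ) (n k : ℕ) : ℝ :=
  (1 / ((m : ℝ) ^ k * (k.factorial : ℝ))) *
    ∑ j ∈ Finset.range (k + 1),
      (k.choose j : ℝ) * (-1 : ℝ) ^ (k - j) * degFall ((m : ℝ) * (j : ℝ) + 1) lam n

/-- The degenerate Dowling polynomials `D_{m,λ}(n,x) = Σ_{k=0}^n W_{m,λ}(n,k) xᵏ`. -/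
noncomputable def degDowling (m : ℕ) (lam : ℝ) (n : ℕ) (x : ℝ) : ℝ :=
  ∑ k ∈ Finset.range (n + 1), degWhitney m lam n k * x ^ k

lemma degFall_succ (x lam : ℝ) (n : ℕ) :
    degFall x lam (n + 1) = degFall x lam n * (x - n * lam) := Finset.prod_range_succ _ _

lemma degFall_vandermonde (lam x y : ℝ) (n : ℕ) :
    degFall (x + y) lam n =
      ∑ j ∈ Finset.range (n + 1), (n.choose j : ℝ) * degFall x lam j * degFall y lam (n - j) := by
  induction n with
  | zero => simp [degFall]
  | succ n ih =>
    rw [degFall_succ, ih, Finset.sum_mul]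
    have key : ∀ j ∈ Finset.range (n+1),
        (n.choose j : ℝ) * degFall x lam j * degFall y lam (n - j) * (x + y - n * lam)
        = (n.choose j : ℝ) * (degFall x lam (j+1) * degFall y lam (n - j))
          + (n.choose j : ℝ) * (degFall x lam j * degFall y lam (n - j + 1)) := by
      intro j hj
      rw [Finset.mem_range] at hj
      have hj' : j ≤ n := Nat.lt_succ_iff.mp hj
      have hcast : ((n - j : ℕ) : ℝ) = (n : ℝ) - j := by
        push_cast [hj']; ring
      rw [degFall_succ, degFall_succ, hcast]
      ring
    rw [Finset.sum_congr rfl key, Finset.sum_add_distrib]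
    -- RHS decomposition
    rw [Finset.sum_range_succ' (fun j => ((n+1).choose j : ℝ) * degFall x lam j * degFall y lam (n + 1 - j)) (n+1)]
    have h1 : ∀ j ∈ Finset.range (n+1),
        (((n+1).choose (j+1) : ℝ)) * degFall x lam (j+1) * degFall y lam (n + 1 - (j+1))
        = (n.choose j : ℝ) * (degFall x lam (j+1) * degFall y lam (n - j))
          + (n.choose (j+1) : ℝ) * (degFall x lam (j+1) * degFall y lam (n - j)) := by
      intro j hj
      have : n + 1 - (j + 1) = n - j := by omega
      rw [this, Nat.choose_succ_succ]
      push_cast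
      ring
    rw [Finset.sum_congr rfl h1, Finset.sum_add_distrib]
    have h2 : ∑ j ∈ Finset.range (n+1), (n.choose j : ℝ) * (degFall x lam j * degFall y lam (n - j + 1))
        = (∑ j ∈ Finset.range (n+1), (n.choose (j+1) : ℝ) * (degFall x lam (j+1) * degFall y lam (n - j)))
          + ((n+1).choose 0 : ℝ) * degFall x lam 0 * degFall y lam (n + 1 - 0) := by
      rw [Finset.sum_range_succ' (fun j => (n.choose j : ℝ) * (degFall x lam j * degFall y lam (n - j + 1))) n]
      rw [Finset.sum_range_succ (fun j => (n.choose (j+1) : ℝ) * (degFall x lam (j+1) * degFall y lam (n - j)))]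
      have h3 : ∀ j ∈ Finset.range n,
          (n.choose (j+1) : ℝ) * (degFall x lam (j+1) * degFall y lam (n - (j+1) + 1))
          = (n.choose (j+1) : ℝ) * (degFall x lam (j+1) * degFall y lam (n - j)) := by
        intro j hj
        rw [Finset.mem_range] at hj
        have h4 : n - (j+1) + 1 = n - j := by omega
        rw [h4]
      rw [Finset.sum_congr rfl h3]
      simp [degFall]
    rw [h2]
    ring


lemma alt_sum_eq (f : ℕ → ℝ) (k : ℕ) :
    ((fwdDiff 1)^[k] f) 0 = ∑ i ∈ Finset.range (k+1), (k.choose i : ℝ) * (-1)^(k-i) * f i := by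
  rw [fwdDiff_iter_eq_sum_shift]
  refine Finset.sum_congr rfl fun i hi => ?_
  simp [zsmul_eq_mul]
  push_cast
  ring_nf
  tauto

lemma iter_fwdDiff_zero (k : ℕ) : (fwdDiff (1:ℕ))^[k] (fun _ : ℕ => (0:ℝ)) = fun _ => 0 := by
  induction k with
  | zero => rfl
  | succ k ih =>
    rw [Function.iterate_succ_apply]
    have : fwdDiff (1:ℕ) (fun _ : ℕ => (0:ℝ)) = fun _ => 0 := by
      funext i; simp [fwdDiff]
    rw [this, ih]

lemma fwdDiff_eval (P : Polynomial ℝ) :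
    fwdDiff (1:ℕ) (fun i : ℕ => P.eval (i:ℝ)) = fun i : ℕ => (P.comp (X + C 1) - P).eval (i:ℝ) := by
  funext i
  simp [fwdDiff, eval_comp]

lemma iter_kills (k : ℕ) : ∀ (P : Polynomial ℝ), P.natDegree < k →
    (fwdDiff (1:ℕ))^[k] (fun i : ℕ => P.eval (i:ℝ)) = fun _ => 0 := by
  induction k with
  | zero => intro P h; omega
  | succ k ih =>
    intro P h
    rw [Function.iterate_succ_apply, fwdDiff_eval]
    set Q := P.comp (X + C 1) - P with hQ
    by_cases hQ0 : Q = 0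
    · rw [hQ0]
      simpa using iter_fwdDiff_zero k
    · have hP0 : P ≠ 0 := by
        rintro rfl; simp [hQ] at hQ0
      have hdP : P.natDegree ≠ 0 := by
        intro h0
        apply hQ0
        rw [Polynomial.eq_C_of_natDegree_eq_zero h0] at hQ
        simp [hQ]
      have hcomp : (P.comp (X + C 1)).natDegree = P.natDegree := by
        rw [Polynomial.natDegree_comp, Polynomial.natDegree_X_add_C, mul_one]
      have hlc : (P.comp (X + C 1)).leadingCoeff = P.leadingCoeff := by
        rw [Polynomial.leadingCoeff_comp (by rw [Polynomial.natDegree_X_add_C]; exact one_ne_zero)]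
        rw [(Polynomial.monic_X_add_C (1:ℝ)).leadingCoeff, one_pow, mul_one]
      have hcomp0 : P.comp (X + C 1) ≠ 0 := by
        intro h0
        apply hP0
        have := hlc
        rw [h0] at this
        simpa [Polynomial.leadingCoeff_eq_zero] using this.symm
      have hdc : (P.comp (X + C 1)).degree = P.degree := by
        rw [Polynomial.degree_eq_natDegree hcomp0, Polynomial.degree_eq_natDegree hP0, hcomp]
      have hdeg : Q.degree < P.degree := by
        have := Polynomial.degree_sub_lt hdc hcomp0 hlc
        rw [hdc] at this
        exact this
      have hQd : Q.natDegree < P.natDegree :=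
        Polynomial.natDegree_lt_natDegree hQ0 hdeg
      exact ih Q (by omega)




lemma degWhitney_eq_zero (m : ℕ) (lam : ℝ) {n k : ℕ} (h : n < k) :
    degWhitney m lam n k = 0 := by
  classical
  set P : Polynomial ℝ := ∏ r ∈ Finset.range n, (C (m:ℝ) * X + C (1 - (r:ℝ)*lam)) with hP
  have heval : ∀ i : ℕ, P.eval (i:ℝ) = degFall ((m:ℝ)*(i:ℝ)+1) lam n := by
    intro i
    rw [hP, Polynomial.eval_prod]
    refine Finset.prod_congr rfl fun r _ => ?_
    simp [degFall]
    ring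
  have hdeg : P.natDegree < k := by
    have h1 : P.natDegree ≤ n := by
      refine le_trans (Polynomial.natDegree_prod_le _ _) ?_
      refine le_trans (Finset.sum_le_sum fun r _ => Polynomial.natDegree_linear_le) ?_
      simp
    omega
  have hz := iter_kills k P hdeg
  have h0 : ((fwdDiff 1)^[k] (fun i : ℕ => P.eval (i:ℝ))) 0 = 0 := by rw [hz]
  rw [alt_sum_eq] at h0
  unfold degWhitney
  rw [show (∑ j ∈ Finset.range (k + 1),
      (k.choose j : ℝ) * (-1 : ℝ) ^ (k - j) * degFall ((m : ℝ) * (j : ℝ) + 1) lam n)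
      = ∑ i ∈ Finset.range (k+1), (k.choose i : ℝ) * (-1)^(k-i) * P.eval (i:ℝ) from
    Finset.sum_congr rfl fun i _ => by rw [heval]]
  rw [h0, mul_zero]

lemma key (m : ℕ) (hm : (m:ℝ) ≠ 0) (lam : ℝ) (n k : ℕ) :
    ((k:ℝ)+1) * degWhitney m lam n (k+1) =
      ∑ j ∈ Finset.range n,
        (n.choose j : ℝ) * degFall (m:ℝ) lam (n-j) / m * degWhitney m lam j k := by
  set F : ℕ → ℝ := fun i => degFall ((m:ℝ)*(i:ℝ)+1) lam n with hF
  have hk0 : (k.factorial : ℝ) ≠ 0 := Nat.cast_ne_zero.mpr k.factorial_ne_zero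
  have hinner : ∀ i : ℕ, ∑ j ∈ Finset.range n,
      (n.choose j : ℝ) * degFall ((m:ℝ)*(i:ℝ)+1) lam j * degFall (m:ℝ) lam (n-j)
      = F (i+1) - F i := by
    intro i
    have hv := degFall_vandermonde lam ((m:ℝ)*(i:ℝ)+1) (m:ℝ) n
    rw [Finset.sum_range_succ] at hv
    have hF1 : F (i+1) = degFall ((m:ℝ)*(i:ℝ)+1 + (m:ℝ)) lam n := by
      simp only [hF]
      congr 1
      push_cast
      ring
    have h00 : degFall (m:ℝ) lam (n - n) = 1 := by
      simp [degFall]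
    rw [h00, Nat.choose_self] at hv
    simp only [Nat.cast_one, one_mul, mul_one] at hv
    rw [hF1, hv]
    simp only [hF]
    ring
  have hmid : ∑ i ∈ Finset.range (k+2), ((k+1).choose i : ℝ) * (-1)^(k+1-i) * F i
      = ∑ i ∈ Finset.range (k+1), (k.choose i : ℝ) * (-1)^(k-i) * (F (i+1) - F i) := by
    calc ∑ i ∈ Finset.range (k+2), ((k+1).choose i : ℝ) * (-1)^(k+1-i) * F i
        = ((fwdDiff 1)^[k+1] F) 0 := (alt_sum_eq F (k+1)).symm
      _ = ((fwdDiff 1)^[k] (fwdDiff 1 F)) 0 := by rw [Function.iterate_succ_apply]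
      _ = ∑ i ∈ Finset.range (k+1), (k.choose i : ℝ) * (-1)^(k-i) * (fwdDiff 1 F i) :=
          alt_sum_eq _ k
      _ = _ := Finset.sum_congr rfl fun i _ => by simp [fwdDiff]
  have hL : ((k:ℝ)+1) * degWhitney m lam n (k+1)
      = (1/((m:ℝ)^(k+1) * k.factorial)) *
          ∑ i ∈ Finset.range (k+2), ((k+1).choose i : ℝ) * (-1)^(k+1-i) * F i := by
    unfold degWhitney
    rw [Nat.factorial_succ]
    push_cast
    field_simp
    ring
  have hR : ∑ j ∈ Finset.range n,
        (n.choose j : ℝ) * degFall (m:ℝ) lam (n-j) / m * degWhitney m lam j k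
      = (1/((m:ℝ)^(k+1) * k.factorial)) *
          ∑ i ∈ Finset.range (k+1), (k.choose i : ℝ) * (-1)^(k-i) * (F (i+1) - F i) := by
    unfold degWhitney
    simp only [Finset.mul_sum]
    rw [Finset.sum_comm]
    refine Finset.sum_congr rfl fun i hi => ?_
    rw [← hinner i, Finset.mul_sum, Finset.mul_sum]
    refine Finset.sum_congr rfl fun j hj => ?_
    field_simp
    ring
  rw [hL, hR, hmid]

theorem tst : True := trivial


lemma degFall_one_mul (m : ℕ) (hm : (m:ℝ) ≠ 0) (lam : ℝ) (t : ℕ) :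
    degFall 1 (lam/(m:ℝ)) t * (m:ℝ)^t = degFall (m:ℝ) lam t := by
  unfold degFall
  rw [show (m:ℝ)^t = ∏ _i ∈ Finset.range t, (m:ℝ) from by
    rw [Finset.prod_const, Finset.card_range]]
  rw [← Finset.prod_mul_distrib]
  refine Finset.prod_congr rfl fun i _ => ?_
  field_simp

/-- Derivative formula:
`(d/dx) D_{m,λ}(n,x) = Σ_{j=0}^{n-1} C(n,j) (1)_{n-j,λ/m} m^{n-j-1} D_{m,λ}(j,x)` for `n ≥ 1`. -/
theorem degDowling_deriv (m : ℕ) (hm : 0 < m) (lam : ℝ) (n : ℕ) (hn : 1 ≤ n) (x : ℝ) :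
    deriv (fun t => degDowling m lam n t) x =
      ∑ j ∈ Finset.range n,
        (n.choose j : ℝ) * degFall 1 (lam / (m : ℝ)) (n - j) * (m : ℝ) ^ (n - j - 1) *
          degDowling m lam j x := by
  have hm' : (m:ℝ) ≠ 0 := Nat.cast_ne_zero.mpr hm.ne'
  have hder : deriv (fun t => degDowling m lam n t) x
      = ∑ k ∈ Finset.range (n+1), degWhitney m lam n k * ((k:ℝ) * x^(k-1)) := by
    have hD : HasDerivAt (fun t => degDowling m lam n t)
        (∑ k ∈ Finset.range (n+1), degWhitney m lam n k * ((k:ℝ) * x^(k-1))) x := by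
      unfold degDowling
      exact HasDerivAt.fun_sum fun k _ => (hasDerivAt_pow k x).const_mul _
    exact hD.deriv
  rw [hder]
  rw [Finset.sum_range_succ' (fun k => degWhitney m lam n k * ((k:ℝ) * x^(k-1))) n]
  simp only [Nat.cast_zero, zero_mul, mul_zero, add_zero, Nat.add_sub_cancel]
  have hRHS : ∀ j ∈ Finset.range n,
      (n.choose j : ℝ) * degFall 1 (lam / (m : ℝ)) (n - j) * (m : ℝ) ^ (n - j - 1) *
          degDowling m lam j x
      = ∑ k ∈ Finset.range n,
          ((n.choose j : ℝ) * degFall (m:ℝ) lam (n-j) / m) * (degWhitney m lam j k * x^k) := by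
    intro j hj
    rw [Finset.mem_range] at hj
    have ht : 1 ≤ n - j := by omega
    have hpow : (m:ℝ)^(n-j) = (m:ℝ)^(n-j-1) * m := by
      rw [← pow_succ]
      congr 1
      omega
    have hc : degFall 1 (lam / (m : ℝ)) (n - j) * (m : ℝ) ^ (n - j - 1)
        = degFall (m:ℝ) lam (n-j) / m := by
      rw [← degFall_one_mul m hm' lam (n-j), hpow]
      field_simp
    have hext : degDowling m lam j x = ∑ k ∈ Finset.range n, degWhitney m lam j k * x^k := by
      unfold degDowling
      refine Finset.sum_subset (Finset.range_subset_range.mpr (by omega)) fun k _ hk => ?_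
      rw [Finset.mem_range, not_lt] at hk
      rw [degWhitney_eq_zero m lam (by omega : j < k), zero_mul]
    rw [hext, Finset.mul_sum]
    refine Finset.sum_congr rfl fun k _ => ?_
    linear_combination ((n.choose j : ℝ) * (degWhitney m lam j k * x^k)) * hc
  rw [Finset.sum_congr rfl hRHS, Finset.sum_comm]
  refine Finset.sum_congr rfl fun k hk => ?_
  rw [show degWhitney m lam n (k+1) * ((((k+1 : ℕ)) : ℝ) * x^k)
      = (((k:ℝ)+1) * degWhitney m lam n (k+1)) * x^k from by push_cast; ring,
    key m hm' lam n k, Finset.sum_mul]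
  exact Finset.sum_congr rfl fun j _ => by ring
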